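/- Fix n ≥ 1 and let a = (a_1,…,a_n) satisfy 1 > a_1 > a_2 > … > a_n > 0. Then for every k with 1 ≤ k ≤ n, the partial derivative of w_n with respect to a_k equals ∂w_n(a)/∂a_k = C(n-1,k-1)·a_k^{k-1}·(1-a_k)^{n-k}·(h(k+1,n) - 1). -/

import Mathlib

open Finset Real intervalIntegral

/-- `h(d,n) = Σ_{j=d}^{n} 1/(j-1)` -/
noncomputable def hfun (d n : ℕ) : ℝ := ∑ j ∈ Finset.Icc d n, 1 / ((j : ℝ) - 1)

/-- `s(1,n) = 1/n` and `s(d,n) = ((d-1)/n)·h(d,n)` for `d ≥ 2`. -/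
noncomputable def sfun (d n : ℕ) : ℝ :=
  if d = 1 then 1 / (n : ℝ) else ((d : ℝ) - 1) / (n : ℝ) * hfun d n

/-- `π_{n,k}(a)` for a cutoff sequence `a` (indexed from 1):
`π_{n,0}(a) = (1-a_1)^n` and for `1 ≤ k ≤ n-1`
`π_{n,k}(a) = n·C(n-1,k-1)·∫_{a_{k+1}}^{a_k} t^{k-1}(1-t)^{n-k} dt
  + C(n,k)·a_{k+1}^k·(1-a_{k+1})^{n-k}`. -/
noncomputable def piNK (n k : ℕ) (a : ℕ → ℝ) : ℝ :=
  if k = 0 then (1 - a 1) ^ n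
  else (n : ℝ) * ((n - 1).choose (k - 1) : ℝ) *
        (∫ t in (a (k + 1))..(a k), t ^ (k - 1) * (1 - t) ^ (n - k)) +
      (n.choose k : ℝ) * (a (k + 1)) ^ k * (1 - a (k + 1)) ^ (n - k)

/-- `w_n(a) = Σ_{k=0}^{n-1} π_{n,k}(a)·s(k+1,n)`, the winning probability of the cutoff
strategy with cutoffs `a_1 ≥ a_2 ≥ ⋯`. -/
noncomputable def w (n : ℕ) (a : ℕ → ℝ) : ℝ :=
  ∑ k ∈ Finset.range n, piNK n k a * sfun (k + 1) n

lemma ftc_right (f : ℝ → ℝ) (hf : Continuous f) (c x : ℝ) :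
    HasDerivAt (fun u => ∫ s in c..u, f s) (f x) x :=
  intervalIntegral.integral_hasDerivAt_right (hf.intervalIntegrable _ _)
    (hf.stronglyMeasurableAtFilter _ _) hf.continuousAt

lemma ftc_left (f : ℝ → ℝ) (hf : Continuous f) (c x : ℝ) :
    HasDerivAt (fun u => ∫ s in u..c, f s) (-f x) x :=
  intervalIntegral.integral_hasDerivAt_left (hf.intervalIntegrable _ _)
    (hf.stronglyMeasurableAtFilter _ _) hf.continuousAt

lemma hasDerivAt_one_sub_pow (p : ℕ) (x : ℝ) :
    HasDerivAt (fun t : ℝ => (1 - t) ^ p) (-((p : ℝ) * (1 - x) ^ (p - 1))) x := by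
  have := (hasDerivAt_pow p (1 - x)).comp x ((hasDerivAt_const x (1:ℝ)).sub (hasDerivAt_id x))
  refine this.congr_deriv ?_; simp

lemma hasDerivAt_mul_pow (m p : ℕ) (x : ℝ) :
    HasDerivAt (fun t : ℝ => t ^ m * (1 - t) ^ p)
      ((m : ℝ) * x ^ (m - 1) * (1 - x) ^ p - (p : ℝ) * x ^ m * (1 - x) ^ (p - 1)) x := by
  have h := (hasDerivAt_pow m x).mul (hasDerivAt_one_sub_pow p x)
  refine h.congr_deriv (Eq.symm ?_); ring

lemma contPoly (m p : ℕ) : Continuous (fun t : ℝ => t ^ m * (1 - t) ^ p) := by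
  continuity

lemma hfun_empty (d n : ℕ) (h : n < d) : hfun d n = 0 := by
  unfold hfun; rw [Finset.Icc_eq_empty (by omega)]; simp

lemma hfun_step (d n : ℕ) (hd : d ≤ n) :
    hfun d n = 1 / ((d : ℝ) - 1) + hfun (d + 1) n := by
  unfold hfun
  have : Finset.Icc d n = insert d (Finset.Icc (d + 1) n) := by
    ext x; simp; omega
  rw [this, Finset.sum_insert (by simp)]

lemma sfun_eq (k n : ℕ) (hk : 1 ≤ k) (hkn : k ≤ n) :
    sfun k n = (((k : ℝ) - 1) * hfun (k + 1) n + 1) / n := by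
  unfold sfun
  rcases eq_or_lt_of_le hk with h | h
  · simp [← h]
  · have hk2 : 2 ≤ k := h
    have hne : (k : ℝ) - 1 ≠ 0 := by
      have : (2:ℝ) ≤ (k:ℝ) := by exact_mod_cast hk2
      nlinarith
    rw [if_neg (by omega), hfun_step k n hkn, div_mul_eq_mul_div]
    congr 1
    field_simp
    ring

/-- Formula for the partial derivative of `w_n` in the `k`-th cutoff. -/
theorem stmt12 (n : ℕ) (hn : 1 ≤ n) (a : ℕ → ℝ)
    (hmono : ∀ i j : ℕ, 1 ≤ i → i < j → j ≤ n → a j < a i)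
    (ha1 : a 1 < 1) (han : 0 < a n)
    (k : ℕ) (hk1 : 1 ≤ k) (hkn : k ≤ n) :
    HasDerivAt (fun t : ℝ => w n (Function.update a k t))
      (((n - 1).choose (k - 1) : ℝ) * (a k) ^ (k - 1) * (1 - a k) ^ (n - k) *
        (hfun (k + 1) n - 1))
      (a k) := by
  set x := a k with hx
  set C : ℝ := ((n - 1).choose (k - 1) : ℝ) with hC
  set A : ℝ := -((n : ℝ) * C * x ^ (k - 1) * (1 - x) ^ (n - k)) * sfun k n with hA
  set B : ℝ := (n : ℝ) * C * x ^ (k - 1) * (1 - x) ^ (n - k) * sfun (k + 1) n with hB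
  set d : ℕ → ℝ := fun j => (if j = k - 1 then A else 0) + (if j = k then B else 0) with hd
  have hup : ∀ (t : ℝ) (i : ℕ), i ≠ k → Function.update a k t i = a i :=
    fun t i h => Function.update_of_ne h t a
  have hupk : ∀ t : ℝ, Function.update a k t k = t := fun t => Function.update_self k t a
  have key : ∀ j ∈ Finset.range n,
      HasDerivAt (fun t : ℝ => piNK n j (Function.update a k t) * sfun (j + 1) n) (d j) (a k) := by
    intro j hj
    rw [Finset.mem_range] at hj
    by_cases hjk1 : j = k - 1
    · subst hjk1
      rcases Nat.eq_or_lt_of_le hk1 with hke | hk2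
      · -- k = 1, j = 0
        have hk : k = 1 := hke.symm
        subst hk
        have hfe : (fun t : ℝ => piNK n 0 (Function.update a 1 t) * sfun (0 + 1) n)
            = fun t : ℝ => (1 - t) ^ n * sfun 1 n := by
          funext t; simp [piNK, hupk]
        rw [hfe]
        have h := (hasDerivAt_one_sub_pow n x).mul_const (sfun 1 n)
        refine h.congr_deriv (Eq.symm ?_)
        simp only [hd, hA, hC]
        norm_num
      · -- k ≥ 2, j = k - 1 ≥ 1
        have hk2' : 2 ≤ k := hk2
        obtain ⟨i, rfl⟩ : ∃ i, k = i + 2 := ⟨k - 2, by omega⟩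
        set j : ℕ := i + 1 with hjdef
        have hjeq : i + 2 - 1 = j := rfl
        rw [hjeq]
        have hjn : j < n := by omega
        have hfe : (fun t : ℝ => piNK n j (Function.update a (i+2) t) * sfun (j + 1) n)
            = fun t : ℝ => ((n : ℝ) * ((n - 1).choose (j - 1) : ℝ) *
                (∫ s in t..(a j), s ^ (j - 1) * (1 - s) ^ (n - j)) +
              (n.choose j : ℝ) * (t ^ j * (1 - t) ^ (n - j))) * sfun (j + 1) n := by
          funext t
          simp only [piNK, if_neg (show j ≠ 0 by omega)]
          rw [show j + 1 = i + 2 from rfl, hupk, hup t j (by omega)]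
          ring
        rw [hfe]
        have hcont := contPoly (j - 1) (n - j)
        have h1 := ((ftc_left _ hcont (a j) x).const_mul
          ((n : ℝ) * ((n - 1).choose (j - 1) : ℝ)))
        have h2 := (hasDerivAt_mul_pow j (n - j) x).const_mul ((n.choose j : ℝ))
        have h3 := (h1.add h2).mul_const (sfun (j + 1) n)
        -- identify the derivative value
        have hc1 : (n : ℝ) * ((n - 1).choose (j - 1) : ℝ) = (j : ℝ) * (n.choose j : ℝ) := by
          have h' := (Nat.add_one_mul_choose_eq (n - 1) i).trans (Nat.mul_comm _ _)
          rw [show n - 1 + 1 = n by omega] at h'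
          rw [hjdef, show i + 1 - 1 = i by omega]
          exact_mod_cast h'
        have hc2 : ((n : ℝ) - (j : ℝ)) * (n.choose j : ℝ) = (n : ℝ) * ((n - 1).choose j : ℝ) := by
          have := Nat.choose_mul_succ_eq (n - 1) j
          have hn1 : n - 1 + 1 = n := by omega
          rw [hn1] at this
          have : (((n-1).choose j : ℕ) : ℝ) * (n : ℝ) = ((n.choose j : ℕ) : ℝ) * (((n - j : ℕ)) : ℝ) := by
            exact_mod_cast this
          rw [Nat.cast_sub (by omega)] at this
          linarith [this]
        have hcast : ((n - j : ℕ) : ℝ) = (n : ℝ) - (j : ℝ) := by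
          rw [Nat.cast_sub (by omega)]
        refine h3.congr_deriv (Eq.symm ?_)
        simp only [hd, hA, hC]
        rw [if_pos hjeq.symm, if_neg (show j ≠ i + 2 by omega)]
        have hCeq : C = ((n - 1).choose j : ℝ) := by
          simp [hC, show i + 2 - 1 = j from rfl]
        have hexp1 : (i + 2) - 1 = j := rfl
        have hexp2 : n - (i + 2) = n - j - 1 := by omega
        rw [hexp1, hexp2, show (i:ℕ) + 2 = j + 1 from rfl, hcast]
        linear_combination (sfun (j+1) n * x ^ (j-1) * (1-x)^(n-j)) * hc1 +
          (sfun (j+1) n * x ^ j * (1-x)^(n-j-1)) * hc2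
    · by_cases hjk : j = k
      · -- j = k, k < n
        subst hjk
        have hfe : (fun t : ℝ => piNK n j (Function.update a j t) * sfun (j + 1) n)
            = fun t : ℝ => ((n : ℝ) * ((n - 1).choose (j - 1) : ℝ) *
                (∫ s in (a (j+1))..t, s ^ (j - 1) * (1 - s) ^ (n - j)) +
              (n.choose j : ℝ) * (a (j+1)) ^ j * (1 - a (j+1)) ^ (n - j)) * sfun (j + 1) n := by
          funext t
          simp only [piNK, if_neg (show j ≠ 0 by omega)]
          rw [hupk, hup t (j+1) (by omega)]
        rw [hfe]
        have hcont := contPoly (j - 1) (n - j)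
        have h := (((ftc_right _ hcont (a (j+1)) x).const_mul
            ((n : ℝ) * ((n - 1).choose (j - 1) : ℝ))).add_const
            ((n.choose j : ℝ) * (a (j+1)) ^ j * (1 - a (j+1)) ^ (n - j))).mul_const
            (sfun (j + 1) n)
        refine h.congr_deriv (Eq.symm ?_)
        simp only [hd, hB, hC]
        simp only [if_true, ite_true, zero_add, if_neg hjk1]
        ring
      · -- constant term
        have hfe : (fun t : ℝ => piNK n j (Function.update a k t) * sfun (j + 1) n)
            = fun _ : ℝ => piNK n j a * sfun (j + 1) n := by
          funext t
          rcases Nat.eq_zero_or_pos j with h0 | hpos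
          · subst h0
            simp only [piNK, if_pos rfl, eq_self_iff_true, if_true]
            rw [hup t 1 (by omega)]
          · simp only [piNK, if_neg (by omega : ¬ j = 0)]
            rw [hup t j (by omega), hup t (j+1) (by omega)]
        rw [hfe]
        have : d j = 0 := by simp [hd, if_neg hjk1, if_neg hjk]
        rw [this]
        exact hasDerivAt_const _ _
  have hsum := HasDerivAt.fun_sum key
  have hw : (fun t : ℝ => w n (Function.update a k t))
      = fun t : ℝ => ∑ j ∈ Finset.range n, piNK n j (Function.update a k t) * sfun (j + 1) n := by
    funext t; rfl
  rw [hw]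
  refine hsum.congr_deriv (Eq.symm ?_)
  -- compute the sum of d
  rw [hd]
  rw [Finset.sum_add_distrib, Finset.sum_ite_eq' (Finset.range n) (k-1) (fun _ => A),
    Finset.sum_ite_eq' (Finset.range n) k (fun _ => B)]
  rw [if_pos (Finset.mem_range.mpr (by omega))]
  have hnR : (n : ℝ) ≠ 0 := by positivity
  have hsk : sfun k n = (((k : ℝ) - 1) * hfun (k + 1) n + 1) / n := sfun_eq k n hk1 hkn
  rcases Nat.lt_or_ge k n with hlt | hge
  · rw [if_pos (Finset.mem_range.mpr hlt)]
    have hsk1 : sfun (k + 1) n = ((k : ℝ) / n) * hfun (k + 1) n := by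
      unfold sfun
      rw [if_neg (by omega)]
      push_cast
      ring
    rw [hA, hB, hsk, hsk1]
    field_simp
    ring
  · have hkn' : k = n := le_antisymm hkn hge
    rw [if_neg (by simp [hkn'])]
    subst hkn'
    have h0 : hfun (k + 1) k = 0 := hfun_empty _ _ (by omega)
    rw [hA, hsk, h0]
    field_simp
    ring
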